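/- Off-diagonal bound for twisted congruence sums: Let R ∈ ℳ, let Z₁ ≤ deg R be a non-negative integer, and let F ∈ ℳ divide R. Suppose C, D ∈ 𝒮_ℳ(X) with deg C ≤ (deg R)/10 and deg D ≤ (deg R)/10. Then Σ_{A,B ∈ ℳ, deg(AB) = Z₁, AC ≡ BD (mod F), AC ≠ BD, gcd(AB,R)=1} 1/|AB|^{1/2} ≪ q^{Z₁/2} (Z₁ + 1) |CD| / |F|, with an absolute implied constant. -/

import Mathlib

open scoped BigOperators
open Filter

noncomputable section

namespace FFEH

variable {Fq : Type} [Field Fq] [Fintype Fq]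

open Classical in
/-- The absolute value `|A| = q ^ deg A` of a polynomial `A ∈ 𝔽_q[T]`, with `|0| = 0`. -/
def absP (A : Polynomial Fq) : ℝ :=
  if A = 0 then 0 else (Fintype.card Fq : ℝ) ^ A.natDegree

/-- Monic irreducible ("prime") polynomials. -/
def IsMonicPrime (P : Polynomial Fq) : Prop := P.Monic ∧ Irreducible P

/-- A Dirichlet character of modulus `R` on `𝔽_q[T]`. -/
structure IsDirichletChar (R : Polynomial Fq) (χ : Polynomial Fq → ℂ) : Prop where
  map_one' : χ 1 = 1
  map_mul' : ∀ A B : Polynomial Fq, χ (A * B) = χ A * χ B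
  congr' : ∀ A B : Polynomial Fq, R ∣ A - B → χ A = χ B
  eq_zero_iff' : ∀ A : Polynomial Fq, χ A = 0 ↔ ¬ IsCoprime A R

/-- A primitive Dirichlet character of modulus `R`: one induced by no character of
modulus of strictly smaller degree. -/
def IsPrimitiveChar (R : Polynomial Fq) (χ : Polynomial Fq → ℂ) : Prop :=
  IsDirichletChar R χ ∧
    ∀ S : Polynomial Fq, S.Monic → S ∣ R → S.natDegree < R.natDegree →
      ¬ ∃ χ₁ : Polynomial Fq → ℂ, IsDirichletChar S χ₁ ∧
        ∀ A : Polynomial Fq, IsCoprime A R → χ A = χ₁ A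

/-- An even character: trivial on the nonzero constants. -/
def IsEvenChar (χ : Polynomial Fq → ℂ) : Prop :=
  ∀ a : Fq, a ≠ 0 → χ (Polynomial.C a) = 1

/-- `φ*(R)`: the number of primitive characters of modulus `R`. -/
def numPrimChars (R : Polynomial Fq) : ℕ :=
  Set.ncard {χ : Polynomial Fq → ℂ | IsPrimitiveChar R χ}

/-- The Euler totient `φ(R) = #(𝔽_q[T]/(R))ˣ`. -/
def phiP (R : Polynomial Fq) : ℕ :=
  Nat.card ((Polynomial Fq ⧸ Ideal.span {R})ˣ)

/-- `ω(A)`: the number of distinct monic prime divisors of `A`. -/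
def omegaP (A : Polynomial Fq) : ℕ :=
  Set.ncard {P : Polynomial Fq | IsMonicPrime P ∧ P ∣ A}

open Classical in
/-- The Möbius function on monic polynomials. -/
def muP (A : Polynomial Fq) : ℤ :=
  if Squarefree A then (-1) ^ omegaP A else 0

/-- `d_k(A)`: the number of ways of writing `A` as an ordered product of `k` monic
polynomials. -/
def dk (k : ℕ) (A : Polynomial Fq) : ℕ :=
  Set.ncard {v : Fin k → Polynomial Fq | (∀ i, (v i).Monic) ∧ ∏ i, v i = A}

/-- `A ∈ 𝒮_ℳ(X)`: `A` is monic and all its prime divisors have degree at most `X`. -/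
def SmoothM (X : ℕ) (A : Polynomial Fq) : Prop :=
  A.Monic ∧ ∀ P : Polynomial Fq, IsMonicPrime P → P ∣ A → P.natDegree ≤ X

/-- The Dirichlet `L`-function of a non-trivial character `χ` of modulus `R`:
`L(s,χ) = ∑_{A monic, deg A < deg R} χ(A) |A|^{-s}`. -/
def Lfun (R : Polynomial Fq) (χ : Polynomial Fq → ℂ) (s : ℂ) : ℂ :=
  ∑ᶠ A ∈ {A : Polynomial Fq | A.Monic ∧ A.natDegree < R.natDegree},
    χ A * (absP A : ℂ) ^ (-s)

open Classical in
/-- The von Mangoldt function: `Λ(A) = log |P|` if `A = P^j` (`P` monic prime, `j ≥ 1`),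
and `0` otherwise. -/
def LambdaP (A : Polynomial Fq) : ℝ :=
  if h : ∃ P : Polynomial Fq, (P.Monic ∧ Irreducible P) ∧ ∃ j : ℕ, 1 ≤ j ∧ A = P ^ j
  then Real.log (absP h.choose) else 0

/-- The partial Euler product `P_X(s,χ)`. -/
def PX (X : ℕ) (χ : Polynomial Fq → ℂ) (s : ℂ) : ℂ :=
  Complex.exp (∑ᶠ A ∈ {A : Polynomial Fq | A.Monic ∧ A.natDegree ≤ X},
    χ A * (LambdaP A : ℂ) / ((absP A : ℂ) ^ s * (Real.log (absP A) : ℂ)))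

/-- The `L`-function of `χ` as a polynomial in the variable `w = q^{-s}`. -/
def LPoly (R : Polynomial Fq) (χ : Polynomial Fq → ℂ) : Polynomial ℂ :=
  ∑ n ∈ Finset.range R.natDegree,
    Polynomial.C (∑ᶠ A ∈ {A : Polynomial Fq | A.Monic ∧ A.natDegree = n}, χ A) *
      Polynomial.X ^ n

/-- The sum of `f` over the zeros of `L(s,χ)` counted with multiplicity, including
all the vertical `2π/log q`-periodic repetitions: the zeros are exactly the points
`-log w / log q + 2πim/log q` for `w` a root (with multiplicity) of the `L`-polynomial
and `m ∈ ℤ`. -/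
def zeroSum (R : Polynomial Fq) (χ : Polynomial Fq → ℂ) (f : ℂ → ℂ) : ℂ :=
  ((LPoly R χ).roots.map (fun w => ∑' m : ℤ,
    f (-Complex.log w / (Real.log (Fintype.card Fq) : ℂ) +
        2 * Real.pi * Complex.I * (m : ℂ) / (Real.log (Fintype.card Fq) : ℂ)))).sum

/-- The exponential integral `E₁(y) = ∫_{w=y}^{y+∞} e^{-w}/w dw`, along the horizontal
ray from `y` in the direction of `+1`. -/
def E1 (y : ℂ) : ℂ :=
  ∫ t : ℝ in Set.Ioi (0 : ℝ), Complex.exp (-(y + (t : ℂ))) / (y + (t : ℂ))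

/-- `U(z) = ∫_0^∞ u(x) E₁(z log x) dx`. -/
def Ufun (u : ℝ → ℝ) (z : ℂ) : ℂ :=
  ∫ x : ℝ in Set.Ioi (0 : ℝ), (u x : ℂ) * E1 (z * (Real.log x : ℂ))

/-- The Mellin transform `ũ(s) = ∫_0^∞ x^{s-1} u(x) dx`. -/
def mellinT (u : ℝ → ℝ) (s : ℂ) : ℂ :=
  ∫ x : ℝ in Set.Ioi (0 : ℝ), (x : ℂ) ^ (s - 1) * (u x : ℂ)

/-- The arithmetic-factor constant `a(k)`. -/
def aConst (Fq : Type) [Field Fq] [Fintype Fq] (k : ℕ) : ℝ :=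
  ∏' P : {P : Polynomial Fq // IsMonicPrime P},
    (1 - (absP P.1)⁻¹) ^ (k ^ 2) * ∑' m : ℕ, (dk k (P.1 ^ m) : ℝ) ^ 2 / absP (P.1 ^ m)

/-- The modified partial Euler product `P_X^*(s,χ)`. -/
def PXstar (X : ℕ) (χ : Polynomial Fq → ℂ) (s : ℂ) : ℂ :=
  (∏ᶠ P ∈ {P : Polynomial Fq | IsMonicPrime P ∧ P.natDegree ≤ X},
      (1 - χ P / (absP P : ℂ) ^ s)⁻¹) *
    ∏ᶠ P ∈ {P : Polynomial Fq | IsMonicPrime P ∧ X < 2 * P.natDegree ∧ P.natDegree ≤ X},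
      (1 + χ P ^ 2 / (2 * (absP P : ℂ) ^ (2 * s)))⁻¹

open Classical in
/-- The multiplicity of `P` in `A` (for `A ≠ 0`). -/
def multP (P A : Polynomial Fq) : ℕ :=
  if A = 0 then 0 else Nat.findGreatest (fun e => P ^ e ∣ A) A.natDegree

/-- Local coefficients of the Dirichlet series of `P_X^*(s,χ)^k`. -/
def locAlpha (k X : ℕ) (P : Polynomial Fq) (m : ℕ) : ℝ :=
  if m = 0 then 1
  else if X < P.natDegree then 0
  else if 2 * P.natDegree ≤ X then (dk k (P ^ m) : ℝ)
  else ∑ j ∈ Finset.range (m / 2 + 1),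
    (dk k (P ^ (m - 2 * j)) : ℝ) * (dk k (P ^ j) : ℝ) * (-(2 : ℝ)⁻¹) ^ j

/-- `α_k(A)`: the coefficients of the Dirichlet series `P_X^*(s,χ)^k = ∑ α_k(A)χ(A)|A|^{-s}`. -/
def alphaK (k X : ℕ) (A : Polynomial Fq) : ℝ :=
  ∏ᶠ P ∈ {P : Polynomial Fq | IsMonicPrime P ∧ P ∣ A}, locAlpha k X P (multP P A)

/-- Local coefficients of the Dirichlet series of `P_X^*(s,χ)^{-1}`. -/
def locAlphaNeg (X : ℕ) (P : Polynomial Fq) (m : ℕ) : ℝ :=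
  if m = 0 then 1
  else if X < P.natDegree then 0
  else if m = 1 then -1
  else if m = 2 then (if 2 * P.natDegree ≤ X then 0 else 2⁻¹)
  else if m = 3 then (if 2 * P.natDegree ≤ X then 0 else -2⁻¹)
  else 0

/-- The multiplicative function `α_{-1}`. -/
def alphaNeg (X : ℕ) (A : Polynomial Fq) : ℝ :=
  ∏ᶠ P ∈ {P : Polynomial Fq | IsMonicPrime P ∧ P ∣ A}, locAlphaNeg X P (multP P A)

/-- The cosine integral `Ci(y) = -∫_y^∞ cos t / t dt`. -/
def Ci (y : ℝ) : ℝ := -∫ t : ℝ in Set.Ioi y, Real.cos t / t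

open Classical in
/-- The greatest common monic divisor of two polynomials. -/
def gcdP (A B : Polynomial Fq) : Polynomial Fq :=
  Polynomial.C ((EuclideanDomain.gcd A B).leadingCoeff)⁻¹ * EuclideanDomain.gcd A B

/-- The decomposition shape of Lemma `A₁A₂A₃ = B₁B₂B₃`: all factors monic, the
coprimality conditions `gcd(V_{i,j}, V_{k,l}) = 1` for `i ≠ k` and `j ≠ l`, and the six
product equations. -/
def Decomp3 (A1 A2 A3 B1 B2 B3 G1 G2 G3 V12 V13 V21 V23 V31 V32 : Polynomial Fq) : Prop :=
  G1.Monic ∧ G2.Monic ∧ G3.Monic ∧ V12.Monic ∧ V13.Monic ∧ V21.Monic ∧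
    V23.Monic ∧ V31.Monic ∧ V32.Monic ∧
  IsCoprime V12 V21 ∧ IsCoprime V12 V23 ∧ IsCoprime V12 V31 ∧
  IsCoprime V13 V21 ∧ IsCoprime V13 V31 ∧ IsCoprime V13 V32 ∧
  IsCoprime V21 V32 ∧ IsCoprime V23 V31 ∧ IsCoprime V23 V32 ∧
  A1 = G1 * V12 * V13 ∧ B1 = G1 * V21 * V31 ∧
  A2 = G2 * V21 * V23 ∧ B2 = G2 * V12 * V32 ∧
  A3 = G3 * V31 * V32 ∧ B3 = G3 * V13 * V23

/-! ### Auxiliary counting lemmas -/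

private lemma finite_natDegree_le (n : ℕ) : {p : Polynomial Fq | p.natDegree ≤ n}.Finite := by
  classical
  apply Set.Finite.of_finite_image (f := fun p => fun i : Fin (n + 1) => p.coeff i)
  · exact Set.toFinite _
  · intro p hp q hq hpq
    ext i
    by_cases hi : i ≤ n
    · exact congrFun hpq ⟨i, Nat.lt_succ_of_le hi⟩
    · push_neg at hi
      rw [Polynomial.coeff_eq_zero_of_natDegree_lt (lt_of_le_of_lt hp hi),
        Polynomial.coeff_eq_zero_of_natDegree_lt (lt_of_le_of_lt hq hi)]

private lemma finite_monic (n : ℕ) : {p : Polynomial Fq | p.Monic ∧ p.natDegree = n}.Finite :=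
  (finite_natDegree_le n).subset fun _ hp => le_of_eq hp.2

private lemma card_monic_le (n : ℕ) :
    (finite_monic (Fq := Fq) n).toFinset.card ≤ Fintype.card Fq ^ n := by
  classical
  have h := Finset.card_le_card_of_injOn (f := fun p => fun i : Fin n => p.coeff i)
    (s := (finite_monic (Fq := Fq) n).toFinset) (t := Finset.univ)
    (fun _ _ => Finset.mem_univ _) ?_
  · simpa using h
  · intro p hp q hq hpq
    simp only [Finset.coe_sort_coe, Set.Finite.mem_toFinset, Set.mem_setOf_eq,
      Set.Finite.coe_toFinset, Set.mem_setOf_eq] at hp hq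
    ext i
    rcases lt_trichotomy i n with h | h | h
    · exact congrFun hpq ⟨i, h⟩
    · have h1 : p.coeff i = 1 := by
        have := hp.1.coeff_natDegree; rwa [hp.2, ← h] at this
      have h2 : q.coeff i = 1 := by
        have := hq.1.coeff_natDegree; rwa [hq.2, ← h] at this
      rw [h1, h2]
    · rw [Polynomial.coeff_eq_zero_of_natDegree_lt (by omega : p.natDegree < i),
        Polynomial.coeff_eq_zero_of_natDegree_lt (by omega : q.natDegree < i)]

private def Tset (k : ℕ) : Set (Polynomial Fq) :=
  {G | G ≠ 0 ∧ G.natDegree ≤ k ∧ (G.natDegree = k → G.leadingCoeff = 1)}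

private lemma finite_Tset (k : ℕ) : (Tset (Fq := Fq) k).Finite :=
  (finite_natDegree_le k).subset fun _ hG => hG.2.1

private lemma card_Tset_le (k : ℕ) :
    (finite_Tset (Fq := Fq) k).toFinset.card ≤ 2 * Fintype.card Fq ^ k := by
  classical
  have hdich : ∀ G ∈ Tset (Fq := Fq) k, G.coeff k = 0 ∨ G.coeff k = 1 := by
    intro G hG
    rcases eq_or_lt_of_le hG.2.1 with h | h
    · right
      have := hG.2.2 h
      rwa [Polynomial.leadingCoeff, h] at this
    · left; exact Polynomial.coeff_eq_zero_of_natDegree_lt h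
  have h := Finset.card_le_card_of_injOn
    (f := fun G : Polynomial Fq => ((decide (G.coeff k = 1) : Bool), fun i : Fin k => G.coeff i))
    (s := (finite_Tset (Fq := Fq) k).toFinset)
    (t := (Finset.univ : Finset (Bool × (Fin k → Fq))))
    (fun _ _ => Finset.mem_univ _) ?_
  · calc (finite_Tset (Fq := Fq) k).toFinset.card
        ≤ (Finset.univ : Finset (Bool × (Fin k → Fq))).card := h
      _ = 2 * Fintype.card Fq ^ k := by
          simp [Finset.card_univ, Fintype.card_prod]
  · intro p hp q hq hpq
    simp only [Finset.coe_sort_coe, Set.Finite.coe_toFinset] at hp hq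
    have h1 : (decide (p.coeff k = 1) : Bool) = decide (q.coeff k = 1) :=
      congrArg Prod.fst hpq
    have h2 : (fun i : Fin k => p.coeff i) = fun i : Fin k => q.coeff i :=
      congrArg Prod.snd hpq
    have hk : p.coeff k = q.coeff k := by
      rw [decide_eq_decide] at h1
      rcases hdich p hp with h | h <;> rcases hdich q hq with h' | h' <;>
        simp [h, h'] at h1 ⊢ <;> tauto
    ext i
    rcases lt_trichotomy i k with h | h | h
    · exact congrFun h2 ⟨i, h⟩
    · rw [h, hk]
    · rw [Polynomial.coeff_eq_zero_of_natDegree_lt (lt_of_le_of_lt hp.2.1 h),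
        Polynomial.coeff_eq_zero_of_natDegree_lt (lt_of_le_of_lt hq.2.1 h)]

private def Sab (C D F : Polynomial Fq) (a b : ℕ) : Set (Polynomial Fq × Polynomial Fq) :=
  {p | p.1.Monic ∧ p.2.Monic ∧ p.1.natDegree = a ∧ p.2.natDegree = b ∧
    F ∣ (p.1 * C - p.2 * D) ∧ p.1 * C ≠ p.2 * D}

private lemma finite_Sab (C D F : Polynomial Fq) (a b : ℕ) : (Sab C D F a b).Finite := by
  apply Set.Finite.subset ((finite_natDegree_le a).prod (finite_natDegree_le b))
  intro p hp
  exact ⟨le_of_eq hp.2.2.1, le_of_eq hp.2.2.2.1⟩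

private lemma key_count (C D F : Polynomial Fq) (hC : C.Monic) (hD : D.Monic) (hF : F.Monic)
    (a b : ℕ) (hab : b + D.natDegree ≤ a + C.natDegree) :
    (finite_Sab C D F a b).toFinset.card * Fintype.card Fq ^ F.natDegree ≤
      2 * Fintype.card Fq ^ (a + b + C.natDegree + D.natDegree) := by
  classical
  set Q := Fintype.card Fq with hQ
  set c := C.natDegree with hc
  set d := D.natDegree with hd
  set f := F.natDegree with hf
  have hQ1 : 1 ≤ Q := Fintype.card_pos
  -- basic degree facts for members of `Sab`
  have hdegM : ∀ p ∈ Sab C D F a b, (p.1 * C - p.2 * D).natDegree ≤ a + c ∧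
      p.1 * C - p.2 * D ≠ 0 := by
    rintro p ⟨hA, hB, ha, hb, hdvd, hne⟩
    have hAC : (p.1 * C).natDegree = a + c := by rw [hA.natDegree_mul hC, ha]
    have hBD : (p.2 * D).natDegree = b + d := by rw [hB.natDegree_mul hD, hb]
    constructor
    · refine (Polynomial.natDegree_sub_le _ _).trans ?_
      rw [hAC, hBD]
      omega
    · exact sub_ne_zero.mpr hne
  by_cases hfN : f ≤ a + c
  · -- main case
    have hcard : (finite_Sab C D F a b).toFinset.card ≤
        ((finite_monic (Fq := Fq) b).toFinset ×ˢ
          (finite_Tset (Fq := Fq) (a + c - f)).toFinset).card := by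
      apply Finset.card_le_card_of_injOn (f := fun p => (p.2, (p.1 * C - p.2 * D) /ₘ F))
      · intro p hp
        rw [Finset.mem_coe, Set.Finite.mem_toFinset] at hp
        obtain ⟨hA, hB, ha, hb, hdvd, hne⟩ := hp
        obtain ⟨hMle, hMne⟩ := hdegM p ⟨hA, hB, ha, hb, hdvd, hne⟩
        set M := p.1 * C - p.2 * D with hMdef
        set G := M /ₘ F with hGdef
        have hMG : M = F * G := by
          have h0 : M %ₘ F = 0 := (Polynomial.modByMonic_eq_zero_iff_dvd hF).mpr hdvd
          have := Polynomial.modByMonic_add_div M F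
          rw [h0, zero_add] at this
          exact this.symm
        have hG0 : G ≠ 0 := by
          intro h
          rw [h, mul_zero] at hMG
          exact hMne hMG
        have hdegFG : M.natDegree = f + G.natDegree := by
          rw [hMG, Polynomial.natDegree_mul hF.ne_zero hG0]
        have hGle : G.natDegree ≤ a + c - f := by omega
        have hGlead : G.natDegree = a + c - f → G.leadingCoeff = 1 := by
          intro hGk
          have hMN : M.natDegree = a + c := by omega
          have hcoefAC : (p.1 * C).coeff (a + c) = 1 := by
            have hmon : (p.1 * C).Monic := hA.mul hC
            have : (p.1 * C).natDegree = a + c := by rw [hA.natDegree_mul hC, ha]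
            rw [← this]; exact hmon.coeff_natDegree
          have hbd : (p.2 * D).natDegree = b + d := by rw [hB.natDegree_mul hD, hb]
          have hcoefBD : (p.2 * D).coeff (a + c) = 0 ∨ (p.2 * D).coeff (a + c) = 1 := by
            rcases eq_or_lt_of_le hab with h | h
            · right
              have hmon : (p.2 * D).Monic := hB.mul hD
              have : (p.2 * D).natDegree = a + c := by omega
              rw [← this]; exact hmon.coeff_natDegree
            · left
              exact Polynomial.coeff_eq_zero_of_natDegree_lt (by omega)
          have hMlead : M.leadingCoeff = M.coeff (a + c) := by rw [Polynomial.leadingCoeff, hMN]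
          have hMcoeff : M.coeff (a + c) = (p.1 * C).coeff (a + c) - (p.2 * D).coeff (a + c) := by
            rw [hMdef, Polynomial.coeff_sub]
          rcases hcoefBD with h0 | h1
          · have hlead1 : M.leadingCoeff = 1 := by rw [hMlead, hMcoeff, hcoefAC, h0, sub_zero]
            have := Polynomial.leadingCoeff_mul F G
            rw [← hMG, hlead1, hF.leadingCoeff, one_mul] at this
            exact this.symm
          · exfalso
            have : M.leadingCoeff = 0 := by rw [hMlead, hMcoeff, hcoefAC, h1, sub_self]
            exact hMne (Polynomial.leadingCoeff_eq_zero.mp this)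
        rw [Finset.mem_coe, Finset.mem_product, Set.Finite.mem_toFinset, Set.Finite.mem_toFinset]
        exact ⟨⟨hB, hb⟩, hG0, hGle, hGlead⟩
      · intro p hp q hq hpq
        simp only [Finset.coe_sort_coe, Set.Finite.coe_toFinset] at hp hq
        have h2 : p.2 = q.2 := congrArg Prod.fst hpq
        have hG : (p.1 * C - p.2 * D) /ₘ F = (q.1 * C - q.2 * D) /ₘ F :=
          congrArg Prod.snd hpq
        have hMp : p.1 * C - p.2 * D = F * ((p.1 * C - p.2 * D) /ₘ F) := by
          have h0 : (p.1 * C - p.2 * D) %ₘ F = 0 :=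
            (Polynomial.modByMonic_eq_zero_iff_dvd hF).mpr hp.2.2.2.2.1
          have := Polynomial.modByMonic_add_div (p.1 * C - p.2 * D) F
          rw [h0, zero_add] at this
          exact this.symm
        have hMq : q.1 * C - q.2 * D = F * ((q.1 * C - q.2 * D) /ₘ F) := by
          have h0 : (q.1 * C - q.2 * D) %ₘ F = 0 :=
            (Polynomial.modByMonic_eq_zero_iff_dvd hF).mpr hq.2.2.2.2.1
          have := Polynomial.modByMonic_add_div (q.1 * C - q.2 * D) F
          rw [h0, zero_add] at this
          exact this.symm
        have hMeq : p.1 * C - p.2 * D = q.1 * C - q.2 * D := by rw [hMp, hMq, hG]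
        have h1 : p.1 * C = q.1 * C := by
          rw [h2] at hMeq
          exact sub_left_inj.mp hMeq
        have h1' : p.1 = q.1 := mul_right_cancel₀ hC.ne_zero h1
        exact Prod.ext h1' h2
    have hTb := card_monic_le (Fq := Fq) b
    have hTk := card_Tset_le (Fq := Fq) (a + c - f)
    calc (finite_Sab C D F a b).toFinset.card * Q ^ f
        ≤ ((finite_monic (Fq := Fq) b).toFinset.card *
            (finite_Tset (Fq := Fq) (a + c - f)).toFinset.card) * Q ^ f := by
          rw [← Finset.card_product]
          exact Nat.mul_le_mul_right _ hcard
      _ ≤ (Q ^ b * (2 * Q ^ (a + c - f))) * Q ^ f :=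
          Nat.mul_le_mul_right _ (Nat.mul_le_mul hTb hTk)
      _ = 2 * (Q ^ b * Q ^ (a + c - f) * Q ^ f) := by ring
      _ = 2 * Q ^ (b + ((a + c - f) + f)) := by rw [pow_add, pow_add]; ring
      _ = 2 * Q ^ (a + b + c) := by congr 2; omega
      _ ≤ 2 * Q ^ (a + b + c + d) :=
          Nat.mul_le_mul_left _ (Nat.pow_le_pow_right hQ1 (by omega))
  · -- degenerate case: the set is empty
    have hempty : (finite_Sab C D F a b).toFinset = ∅ := by
      rw [Finset.eq_empty_iff_forall_notMem]
      intro p hp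
      rw [Set.Finite.mem_toFinset] at hp
      obtain ⟨hMle, hMne⟩ := hdegM p hp
      have := Polynomial.natDegree_le_of_dvd hp.2.2.2.2.1 hMne
      omega
    rw [hempty]
    simp

private lemma key_count' (C D F : Polynomial Fq) (hC : C.Monic) (hD : D.Monic) (hF : F.Monic)
    (a b : ℕ) :
    (finite_Sab C D F a b).toFinset.card * Fintype.card Fq ^ F.natDegree ≤
      2 * Fintype.card Fq ^ (a + b + C.natDegree + D.natDegree) := by
  classical
  rcases le_total (b + D.natDegree) (a + C.natDegree) with h | h
  · exact key_count C D F hC hD hF a b h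
  · have hswap : (finite_Sab C D F a b).toFinset.card ≤
        (finite_Sab D C F b a).toFinset.card := by
      apply Finset.card_le_card_of_injOn (f := fun p => (p.2, p.1))
      · intro p hp
        rw [Finset.mem_coe, Set.Finite.mem_toFinset] at hp ⊢
        obtain ⟨hA, hB, ha, hb, hdvd, hne⟩ := hp
        exact ⟨hB, hA, hb, ha, dvd_sub_comm.mp hdvd, fun hcon => hne hcon.symm⟩
      · intro p _ q _ hpq
        have h1 : p.2 = q.2 := congrArg Prod.fst hpq
        have h2 : p.1 = q.1 := congrArg Prod.snd hpq
        exact Prod.ext h2 h1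
    calc (finite_Sab C D F a b).toFinset.card * Fintype.card Fq ^ F.natDegree
        ≤ (finite_Sab D C F b a).toFinset.card * Fintype.card Fq ^ F.natDegree :=
          Nat.mul_le_mul_right _ hswap
      _ ≤ 2 * Fintype.card Fq ^ (b + a + D.natDegree + C.natDegree) :=
          key_count D C F hD hC hF b a h
      _ = 2 * Fintype.card Fq ^ (a + b + C.natDegree + D.natDegree) := by
          congr 2; omega

/-- **Off-diagonal bound for twisted congruence sums**, with an absolute implied
constant. -/
theorem off_diagonal_congruence_bound :
    ∃ Cst : ℝ, 0 < Cst ∧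
      ∀ (Fq : Type) [Field Fq] [Fintype Fq],
        ∀ X : ℕ, ∀ R : Polynomial Fq, R.Monic →
          ∀ Z₁ : ℕ, Z₁ ≤ R.natDegree →
            ∀ F : Polynomial Fq, F.Monic → F ∣ R →
              ∀ C D : Polynomial Fq, SmoothM X C → SmoothM X D →
                10 * C.natDegree ≤ R.natDegree → 10 * D.natDegree ≤ R.natDegree →
                  (∑ᶠ p ∈ {p : Polynomial Fq × Polynomial Fq |
                      p.1.Monic ∧ p.2.Monic ∧ (p.1 * p.2).natDegree = Z₁ ∧
                      F ∣ (p.1 * C - p.2 * D) ∧ p.1 * C ≠ p.2 * D ∧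
                      IsCoprime (p.1 * p.2) R},
                    (Real.sqrt (absP (p.1 * p.2)))⁻¹) ≤
                  Cst * ((Fintype.card Fq : ℝ) ^ ((Z₁ : ℝ) / 2) * ((Z₁ : ℝ) + 1) *
                    absP (C * D) / absP F) := by
  classical
  refine ⟨2, by norm_num, ?_⟩
  intro Fq _ _ X R hR Z₁ hZ₁ F hF hFR C D hCs hDs hCdeg hDdeg
  have hC : C.Monic := hCs.1
  have hD : D.Monic := hDs.1
  set Q := Fintype.card Fq with hQ
  set c := C.natDegree with hc
  set d := D.natDegree with hd
  set f := F.natDegree with hf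
  have hQ1 : 1 ≤ Q := Fintype.card_pos
  have hQpos : (0 : ℝ) < (Q : ℝ) := by exact_mod_cast hQ1
  set S : Set (Polynomial Fq × Polynomial Fq) :=
    {p : Polynomial Fq × Polynomial Fq |
      p.1.Monic ∧ p.2.Monic ∧ (p.1 * p.2).natDegree = Z₁ ∧
      F ∣ (p.1 * C - p.2 * D) ∧ p.1 * C ≠ p.2 * D ∧
      IsCoprime (p.1 * p.2) R} with hSdef
  have hdegsum : ∀ p ∈ S, p.1.natDegree + p.2.natDegree = Z₁ := by
    rintro p ⟨hA, hB, hdeg, _⟩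
    rw [← hA.natDegree_mul hB]
    exact hdeg
  have hSfin : S.Finite := by
    apply Set.Finite.subset ((finite_natDegree_le Z₁).prod (finite_natDegree_le Z₁))
    intro p hp
    have := hdegsum p hp
    exact ⟨show p.1.natDegree ≤ Z₁ by omega, show p.2.natDegree ≤ Z₁ by omega⟩
  -- the natural-number cardinality bound
  have hcardN : hSfin.toFinset.card * Q ^ f ≤ 2 * (Z₁ + 1) * Q ^ (Z₁ + c + d) := by
    have hsub : hSfin.toFinset ⊆ (Finset.range (Z₁ + 1)).biUnion
        (fun a => (finite_Sab C D F a (Z₁ - a)).toFinset) := by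
      intro p hp
      rw [Set.Finite.mem_toFinset] at hp
      have hab := hdegsum p hp
      obtain ⟨hA, hB, hdeg, hdvd, hne, hcop⟩ := hp
      refine Finset.mem_biUnion.mpr ⟨p.1.natDegree, Finset.mem_range.mpr (by omega), ?_⟩
      rw [Set.Finite.mem_toFinset]
      exact ⟨hA, hB, rfl, by omega, hdvd, hne⟩
    calc hSfin.toFinset.card * Q ^ f
        ≤ (∑ a ∈ Finset.range (Z₁ + 1),
            (finite_Sab C D F a (Z₁ - a)).toFinset.card) * Q ^ f :=
          Nat.mul_le_mul_right _ ((Finset.card_le_card hsub).trans Finset.card_biUnion_le)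
      _ = ∑ a ∈ Finset.range (Z₁ + 1),
            (finite_Sab C D F a (Z₁ - a)).toFinset.card * Q ^ f := Finset.sum_mul _ _ _
      _ ≤ ∑ a ∈ Finset.range (Z₁ + 1), 2 * Q ^ (Z₁ + c + d) := by
          apply Finset.sum_le_sum
          intro a ha
          rw [Finset.mem_range] at ha
          have := key_count' C D F hC hD hF a (Z₁ - a)
          rwa [show a + (Z₁ - a) + c + d = Z₁ + c + d by omega] at this
      _ = 2 * (Z₁ + 1) * Q ^ (Z₁ + c + d) := by
          rw [Finset.sum_const, Finset.card_range, smul_eq_mul]; ring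
  -- evaluate the sum
  set r : ℝ := (Q : ℝ) ^ ((Z₁ : ℝ) / 2) with hr
  have hrpos : 0 < r := Real.rpow_pos_of_pos hQpos _
  have hrr : r * r = (Q : ℝ) ^ Z₁ := by
    rw [hr, ← Real.rpow_natCast (Q : ℝ) Z₁, ← Real.rpow_add hQpos]
    congr 1
    ring
  have hterm : ∀ p ∈ hSfin.toFinset, (Real.sqrt (absP (p.1 * p.2)))⁻¹ = r⁻¹ := by
    intro p hp
    rw [Set.Finite.mem_toFinset] at hp
    have hmon : (p.1 * p.2).Monic := hp.1.mul hp.2.1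
    have habs : absP (p.1 * p.2) = (Q : ℝ) ^ Z₁ := by
      rw [absP, if_neg hmon.ne_zero, hp.2.2.1]
    rw [habs, ← hrr, Real.sqrt_mul_self hrpos.le]
  have hsum : (∑ᶠ p ∈ S, (Real.sqrt (absP (p.1 * p.2)))⁻¹) =
      (hSfin.toFinset.card : ℝ) * r⁻¹ := by
    rw [finsum_mem_eq_finite_toFinset_sum _ hSfin, Finset.sum_congr rfl hterm,
      Finset.sum_const, nsmul_eq_mul]
  rw [hsum]
  -- absP values
  have hCD : absP (C * D) = (Q : ℝ) ^ (c + d) := by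
    rw [absP, if_neg (hC.mul hD).ne_zero, Polynomial.natDegree_mul hC.ne_zero hD.ne_zero]
  have hFv : absP F = (Q : ℝ) ^ f := by rw [absP, if_neg hF.ne_zero]
  rw [hCD, hFv]
  have hfpos : (0 : ℝ) < (Q : ℝ) ^ f := pow_pos hQpos _
  have hcast : (hSfin.toFinset.card : ℝ) * (Q : ℝ) ^ f ≤
      2 * ((Z₁ : ℝ) + 1) * (Q : ℝ) ^ (Z₁ + c + d) := by
    have := hcardN
    have h2 : ((hSfin.toFinset.card * Q ^ f : ℕ) : ℝ) ≤
        ((2 * (Z₁ + 1) * Q ^ (Z₁ + c + d) : ℕ) : ℝ) := by exact_mod_cast this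
    push_cast at h2
    convert h2 using 2
  have hkey : (hSfin.toFinset.card : ℝ) ≤
      2 * ((Z₁ : ℝ) + 1) * (Q : ℝ) ^ (Z₁ + c + d) / (Q : ℝ) ^ f :=
    (le_div_iff₀ hfpos).mpr hcast
  calc (hSfin.toFinset.card : ℝ) * r⁻¹
      ≤ (2 * ((Z₁ : ℝ) + 1) * (Q : ℝ) ^ (Z₁ + c + d) / (Q : ℝ) ^ f) * r⁻¹ := by
        apply mul_le_mul_of_nonneg_right hkey (inv_nonneg.mpr hrpos.le)
    _ = 2 * (r * ((Z₁ : ℝ) + 1) * (Q : ℝ) ^ (c + d) / (Q : ℝ) ^ f) := by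
        have hsplit : (Q : ℝ) ^ (Z₁ + c + d) = (r * r) * (Q : ℝ) ^ (c + d) := by
          rw [hrr, ← pow_add]
          congr 1
          omega
        rw [hsplit]
        field_simp

end FFEH
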